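/- Let m0 ≥ 2, m1 ≥ m0, and let r solve the (m0,m1)-ODE with lim_{x→∞} r(x) = (2ℓ+1)·π/2 for some integer ℓ and lim_{x→∞} r'(x) = 0. Then |r'(x)| ≤ √(m1+1) for all x ≥ Z_α, where Z_α is the unique zero of α. -/

import Mathlib

open Filter

noncomputable def artanh (x : ℝ) : ℝ := (1/2) * Real.log ((1 + x) / (1 - x))

lemma my_tanh_eq (x : ℝ) :
    Real.tanh x = (1 - Real.exp (-(2*x))) / (1 + Real.exp (-(2*x))) := by
  have h1 : (0:ℝ) < Real.exp x := Real.exp_pos x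
  have h2 : (0:ℝ) < Real.exp (-x) := Real.exp_pos _
  have hab : Real.exp x * Real.exp (-x) = 1 := by
    rw [← Real.exp_add]; simp
  have h3 : Real.exp (-(2*x)) = Real.exp (-x) * Real.exp (-x) := by
    rw [← Real.exp_add]; ring_nf
  rw [Real.tanh_eq_sinh_div_cosh, Real.sinh_eq, Real.cosh_eq, h3]
  have hd : (0:ℝ) < Real.exp x + Real.exp (-x) := by linarith
  have hd2 : (0:ℝ) < 1 + Real.exp (-x) * Real.exp (-x) := by positivity
  field_simp
  nlinarith [hab]

lemma my_tanh_lt_one (x : ℝ) : Real.tanh x < 1 := by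
  rw [my_tanh_eq]
  have h : (0:ℝ) < Real.exp (-(2*x)) := Real.exp_pos _
  rw [div_lt_one (by linarith)]; linarith

lemma my_neg_one_lt_tanh (x : ℝ) : -1 < Real.tanh x := by
  rw [my_tanh_eq]
  have h : (0:ℝ) < Real.exp (-(2*x)) := Real.exp_pos _
  rw [lt_div_iff₀ (by linarith)]; linarith

lemma my_hasDerivAt_tanh (x : ℝ) : HasDerivAt Real.tanh (1 - Real.tanh x ^ 2) x := by
  have h := (Real.hasDerivAt_sinh x).div (Real.hasDerivAt_cosh x) (Real.cosh_pos x).ne'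
  have hfun : Real.tanh = fun y => Real.sinh y / Real.cosh y :=
    funext fun y => Real.tanh_eq_sinh_div_cosh y
  rw [hfun]
  convert h using 1
  have hc := (Real.cosh_pos x).ne'
  have hs := Real.cosh_sq_sub_sinh_sq x
  show 1 - (Real.sinh x / Real.cosh x) ^ 2 = _
  field_simp
  all_goals rfl

lemma my_tanh_mono : Monotone Real.tanh := by
  apply monotone_of_deriv_nonneg (fun x => (my_hasDerivAt_tanh x).differentiableAt)
  intro x
  rw [(my_hasDerivAt_tanh x).deriv]
  nlinarith [my_tanh_lt_one x, my_neg_one_lt_tanh x]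

lemma my_tendsto_tanh : Tendsto Real.tanh atTop (nhds 1) := by
  have he : Tendsto (fun x : ℝ => Real.exp (-(2*x))) atTop (nhds 0) := by
    have h2 : Tendsto (fun x : ℝ => 2 * x) atTop atTop :=
      Tendsto.const_mul_atTop two_pos tendsto_id
    exact Real.tendsto_exp_neg_atTop_nhds_zero.comp h2
  have h : Tendsto (fun x : ℝ => (1 - Real.exp (-(2*x))) / (1 + Real.exp (-(2*x))))
      atTop (nhds 1) := by
    have hnum : Tendsto (fun x : ℝ => 1 - Real.exp (-(2*x))) atTop (nhds (1 - 0)) :=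
      tendsto_const_nhds.sub he
    have hden : Tendsto (fun x : ℝ => 1 + Real.exp (-(2*x))) atTop (nhds (1 + 0)) :=
      tendsto_const_nhds.add he
    have := hnum.div hden (by norm_num)
    simpa using (show Tendsto (fun x : ℝ => (1 - Real.exp (-(2*x))) / (1 + Real.exp (-(2*x))))
      atTop _ from this)
  exact h.congr (fun x => (my_tanh_eq x).symm)

lemma my_tanh_artanh {y : ℝ} (h1 : -1 < y) (h2 : y < 1) : Real.tanh (artanh y) = y := by
  have hu : (0:ℝ) < (1+y)/(1-y) := div_pos (by linarith) (by linarith)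
  have he : Real.exp (2 * artanh y) = (1+y)/(1-y) := by
    rw [artanh, show (2:ℝ) * ((1/2) * Real.log ((1+y)/(1-y))) = Real.log ((1+y)/(1-y)) by ring,
      Real.exp_log hu]
  have he' : Real.exp (-(2 * artanh y)) = (1-y)/(1+y) := by
    rw [Real.exp_neg, he, inv_div]
  rw [my_tanh_eq, he']
  have hy : (0:ℝ) < 1 + y := by linarith
  field_simp
  ring

set_option maxHeartbeats 1000000 in
/-- If r solves the (m0,m1)-ODE with r(x) → (2ℓ+1)π/2 and r'(x) → 0 as x → ∞,
then |r'(x)| ≤ √(m1+1) for all x ≥ Z_α, the unique zero of α. -/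
theorem deriv_bound_right_of_Zalpha (m0 m1 : ℕ) (hm0 : 2 ≤ m0) (hm1 : m0 ≤ m1)
    (α β : ℝ → ℝ)
    (hα : ∀ x, α x = (1/2) * (((m0:ℝ) + m1 - 2) * Real.tanh x + m1 - m0))
    (hβ : ∀ x, β x = (1/4) * (((m0:ℝ) + m1) * Real.tanh x + m1 - m0))
    (r r' : ℝ → ℝ)
    (hr : ∀ x, HasDerivAt r (r' x) x)
    (hr' : ∀ x, HasDerivAt r' (α x * r' x - β x * Real.sin (2 * r x)) x)
    (ℓ : ℤ)
    (hlim : Tendsto r atTop (nhds ((2 * (ℓ:ℝ) + 1) * Real.pi / 2)))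
    (hlim' : Tendsto r' atTop (nhds 0)) :
    ∀ x : ℝ, artanh (((m0:ℝ) - m1) / ((m0:ℝ) + m1 - 2)) ≤ x →
      |r' x| ≤ Real.sqrt ((m1:ℝ) + 1) := by
  intro x hx
  set y : ℝ := ((m0:ℝ) - m1) / ((m0:ℝ) + m1 - 2) with hy_def
  set Z : ℝ := artanh y with hZ_def
  have hm0' : (2:ℝ) ≤ (m0:ℝ) := by exact_mod_cast hm0
  have hm1' : (m0:ℝ) ≤ (m1:ℝ) := by exact_mod_cast hm1
  have hd : (0:ℝ) < (m0:ℝ) + m1 - 2 := by linarith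
  have hy1 : -1 < y := by
    rw [hy_def, lt_div_iff₀ hd]; nlinarith
  have hy2 : y < 1 := by
    rw [hy_def, div_lt_one hd]; linarith
  have hZtanh : Real.tanh Z = y := my_tanh_artanh hy1 hy2
  have hyd : ((m0:ℝ) + m1 - 2) * y = (m0:ℝ) - m1 := by
    rw [hy_def]; field_simp
  -- tanh lower bound for x' ≥ Z
  have htanh_ge : ∀ x' : ℝ, Z ≤ x' → y ≤ Real.tanh x' := by
    intro x' h
    rw [← hZtanh]; exact my_tanh_mono h
  -- α nonneg on [Z, ∞)
  have hα_nonneg : ∀ x' : ℝ, Z ≤ x' → 0 ≤ α x' := by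
    intro x' h
    rw [hα]
    have ht := htanh_ge x' h
    have h2 : ((m0:ℝ) + m1 - 2) * y ≤ ((m0:ℝ) + m1 - 2) * Real.tanh x' :=
      mul_le_mul_of_nonneg_left ht hd.le
    rw [hyd] at h2
    linarith
  -- β ≥ -1/2 on [Z, ∞)
  have hβ_ge : ∀ x' : ℝ, Z ≤ x' → -(1/2 : ℝ) ≤ β x' := by
    intro x' h
    rw [hβ]
    have ht := htanh_ge x' h
    have h2 : ((m0:ℝ) + m1 - 2) * y ≤ ((m0:ℝ) + m1 - 2) * Real.tanh x' :=
      mul_le_mul_of_nonneg_left ht hd.le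
    rw [hyd] at h2
    have h3 := my_neg_one_lt_tanh x'
    nlinarith
  -- the Lyapunov function
  set W : ℝ → ℝ := fun t =>
    (1/2) * (r' t)^2 + (1/4) * (((m0:ℝ) + m1) * Real.tanh t + m1 - m0) * (Real.sin (r t))^2
    with hW_def
  have hWβ : ∀ t, W t = (1/2) * (r' t)^2 + β t * (Real.sin (r t))^2 := by
    intro t; rw [hW_def, hβ]
  -- derivative of W
  have hWd : ∀ t, HasDerivAt W
      (α t * (r' t)^2 + (1/4) * ((m0:ℝ) + m1) * (1 - Real.tanh t ^ 2) * (Real.sin (r t))^2) t := by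
    intro t
    have h1 : HasDerivAt (fun s => (1/2) * (r' s)^2)
        ((1/2) * (2 * r' t ^ 1 * (α t * r' t - β t * Real.sin (2 * r t)))) t :=
      (((hr' t).pow 2)).const_mul (1/2)
    have h2 : HasDerivAt (fun s => (1/4) * (((m0:ℝ) + m1) * Real.tanh s + m1 - m0))
        ((1/4) * (((m0:ℝ) + m1) * (1 - Real.tanh t ^ 2))) t := by
      have := ((my_hasDerivAt_tanh t).const_mul ((m0:ℝ) + m1))
      have h2' := (this.add_const ((m1:ℝ) - m0)).const_mul (1/4)
      exact (h2'.congr_deriv (by ring)).congr_of_eventuallyEq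
        (Filter.Eventually.of_forall fun s => by ring)
    have h3 : HasDerivAt (fun s => (Real.sin (r s))^2)
        (2 * Real.sin (r t) ^ 1 * (Real.cos (r t) * r' t)) t := by
      have hs : HasDerivAt (fun s => Real.sin (r s)) (Real.cos (r t) * r' t) t :=
        (Real.hasDerivAt_sin (r t)).comp t (hr t)
      exact hs.pow 2
    have h4 := h1.add (h2.mul h3)
    refine h4.congr_deriv ?_
    rw [hβ, Real.sin_two_mul]
    ring
  -- W is monotone on [Z, ∞)
  have hWdiff : Differentiable ℝ W := fun t => (hWd t).differentiableAt
  have hmono : MonotoneOn W (Set.Ici Z) := by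
    apply monotoneOn_of_deriv_nonneg (convex_Ici Z) hWdiff.continuous.continuousOn
      (hWdiff.differentiableOn)
    intro t ht
    rw [interior_Ici] at ht
    rw [(hWd t).deriv]
    have h1 : 0 ≤ α t := hα_nonneg t (le_of_lt ht)
    have h2 := my_tanh_lt_one t
    have h3 := my_neg_one_lt_tanh t
    have h4 : (0:ℝ) ≤ (m0:ℝ) + m1 := by linarith
    have h5 : (0:ℝ) ≤ (Real.sin (r t))^2 := sq_nonneg _
    have h6 : (0:ℝ) ≤ (r' t)^2 := sq_nonneg _
    have h7 : (0:ℝ) ≤ 1 - Real.tanh t ^ 2 := by nlinarith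
    positivity
  -- sin² of the limit is 1
  set T : ℝ := (2 * (ℓ:ℝ) + 1) * Real.pi / 2 with hT_def
  have hcosT : Real.cos T = 0 := by
    have : T = (ℓ:ℝ) * Real.pi + Real.pi / 2 := by rw [hT_def]; ring
    rw [this, Real.cos_add, Real.cos_pi_div_two, Real.sin_pi_div_two, Real.sin_int_mul_pi]
    ring
  have hsinT : (Real.sin T)^2 = 1 := by
    have := Real.sin_sq_add_cos_sq T
    rw [hcosT] at this; nlinarith
  -- limit of W
  have hWlim : Tendsto W atTop (nhds ((m1:ℝ)/2)) := by
    have t1 : Tendsto (fun t => (1/2) * (r' t)^2) atTop (nhds ((1/2) * 0^2)) :=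
      (hlim'.pow 2).const_mul (1/2)
    have t2 : Tendsto (fun t => (1/4) * (((m0:ℝ) + m1) * Real.tanh t + ((m1:ℝ) - m0)))
        atTop (nhds ((1/4) * (((m0:ℝ) + m1) * 1 + ((m1:ℝ) - m0)))) :=
      ((my_tendsto_tanh.const_mul ((m0:ℝ) + m1)).add_const ((m1:ℝ) - m0)).const_mul (1/4)
    have t3 : Tendsto (fun t => (Real.sin (r t))^2) atTop (nhds ((Real.sin T)^2)) :=
      ((Real.continuous_sin.tendsto T).comp hlim).pow 2
    have t4 := t1.add (t2.mul t3)
    have t5 : Tendsto W atTop (nhds ((1/2 : ℝ) * 0^2 +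
        (1/4) * (((m0:ℝ) + m1) * 1 + ((m1:ℝ) - m0)) * (Real.sin T)^2)) := by
      apply t4.congr
      intro t
      simp only [hW_def]
      ring
    have heq : (1/2 : ℝ) * 0^2 + (1/4) * (((m0:ℝ) + m1) * 1 + ((m1:ℝ) - m0)) * (Real.sin T)^2
        = (m1:ℝ)/2 := by rw [hsinT]; ring
    rw [heq] at t5
    exact t5
  -- W x ≤ m1/2
  have hWx : W x ≤ (m1:ℝ)/2 := by
    apply ge_of_tendsto hWlim
    filter_upwards [eventually_ge_atTop x] with t ht
    exact hmono hx (le_trans hx ht) ht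
  -- conclude
  have hβx := hβ_ge x hx
  have hs1 : (0:ℝ) ≤ (Real.sin (r x))^2 := sq_nonneg _
  have hs2 : (Real.sin (r x))^2 ≤ 1 := by
    have := Real.neg_one_le_sin (r x)
    have := Real.sin_le_one (r x)
    nlinarith
  have hWxβ := hWβ x
  have hprod : -(1/2:ℝ) ≤ β x * (Real.sin (r x))^2 := by
    nlinarith [mul_nonneg (by linarith : (0:ℝ) ≤ β x + 1/2) hs1]
  have hsq : (r' x)^2 ≤ (m1:ℝ) + 1 := by linarith
  calc |r' x| = Real.sqrt ((r' x)^2) := (Real.sqrt_sq_eq_abs _).symm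
    _ ≤ Real.sqrt ((m1:ℝ) + 1) := Real.sqrt_le_sqrt hsq
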